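/- Hilbert-matrix identity (Equation (3.52)). Let n ∈ ℤ and η ∈ ℂ with η ∉ ℤ. For m ∈ ℤ set c_m := ∫₀^{2π} e^{−imt} K(t) dt. Then the family (c_m / (n + m + η))_{m ∈ ℤ} is summable, and ∫₀^{2π} e^{i(n+η)t} K(t) dt = ((e^{2πiη} − 1) / (2πi)) · Σ_{m ∈ ℤ} c_m / (n + m + η). In particular, |∫₀^{2π} e^{i(n+η)t} K(t) dt| = |1 − e^{2πiη}| · (2π)^{−1} · |Σ_{m ∈ ℤ} c_m / (n + m + η)|. -/

import Mathlib

open MeasureTheory Real Complex Set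

local instance fact_two_pi_pos : Fact ((0:ℝ) < 2 * Real.pi) := ⟨by positivity⟩

lemma hm_lift_sm {f : ℝ → ℂ} (hf : StronglyMeasurable f) :
    StronglyMeasurable (AddCircle.liftIoc (2 * Real.pi) 0 f) := by
  have h : AddCircle.liftIoc (2 * Real.pi) 0 f =
      (fun y : Set.Ioc (0:ℝ) (0 + 2 * Real.pi) => f y) ∘
        (AddCircle.measurableEquivIoc (2 * Real.pi) 0) := rfl
  rw [h]
  exact (hf.comp_measurable measurable_subtype_coe).comp_measurable
    (AddCircle.measurableEquivIoc (2 * Real.pi) 0).measurable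

lemma hm_coeff_lift (f : ℝ → ℂ) (m : ℤ) :
    fourierCoeff (AddCircle.liftIoc (2 * Real.pi) 0 f) m
      = (1 / (2 * Real.pi) : ℝ) •
          ∫ x in (0:ℝ)..(2 * Real.pi), Complex.exp (-(Complex.I * m * x)) * f x := by
  rw [fourierCoeff_eq_intervalIntegral _ m 0, zero_add]
  congr 1
  rw [intervalIntegral.integral_of_le (by positivity), intervalIntegral.integral_of_le (by positivity)]
  refine setIntegral_congr_fun measurableSet_Ioc fun x hx => ?_
  rw [AddCircle.liftIoc_coe_apply (by simpa using hx), fourier_coe_apply, smul_eq_mul]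
  congr 1
  push_cast
  congr 1
  have h2 : (2 * (Real.pi:ℂ)) ≠ 0 := by
    simp [Real.pi_ne_zero]
  field_simp

lemma hm_memLp_lift {f : ℝ → ℂ} (hsm : StronglyMeasurable f)
    (hf : MemLp f 2 (volume.restrict (Set.Ioc 0 (2 * Real.pi)))) :
    MemLp (AddCircle.liftIoc (2 * Real.pi) 0 f) 2 (@AddCircle.haarAddCircle (2 * Real.pi) _) := by
  set F := AddCircle.liftIoc (2 * Real.pi) 0 f with hF
  have hFsm := hm_lift_sm hsm
  have hcomp : (fun x : ℝ => F ((x : AddCircle (2 * Real.pi))))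
      =ᵐ[volume.restrict (Set.Ioc (0:ℝ) (0 + 2 * Real.pi))] f := by
    filter_upwards [ae_restrict_mem measurableSet_Ioc] with x hx
    exact AddCircle.liftIoc_coe_apply hx
  have hvol : MemLp F 2 (volume : Measure (AddCircle (2 * Real.pi))) := by
    refine ⟨hFsm.aestronglyMeasurable, ?_⟩
    rw [← eLpNorm_comp_measurePreserving (p := 2) hFsm.aestronglyMeasurable
      (AddCircle.measurePreserving_mk (2 * Real.pi) 0)]
    show eLpNorm (fun x : ℝ => F ((x : AddCircle (2 * Real.pi)))) 2 _ < ⊤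
    rw [eLpNorm_congr_ae hcomp, zero_add]
    exact hf.2
  have hhaar : (@AddCircle.haarAddCircle (2 * Real.pi) _)
      = (ENNReal.ofReal (2 * Real.pi))⁻¹ • (volume : Measure (AddCircle (2 * Real.pi))) := by
    rw [AddCircle.volume_eq_smul_haarAddCircle, smul_smul,
      ENNReal.inv_mul_cancel (by simpa using Real.pi_pos) ENNReal.ofReal_ne_top, one_smul]
  rw [hhaar]
  exact hvol.smul_measure (by simpa using Real.pi_pos)

lemma hm_integral_lift (f : ℝ → ℂ) :
    ∫ z, AddCircle.liftIoc (2 * Real.pi) 0 f z ∂(@AddCircle.haarAddCircle (2 * Real.pi) _)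
      = (1 / (2 * Real.pi) : ℝ) • ∫ x in (0:ℝ)..(2 * Real.pi), f x := by
  set F := AddCircle.liftIoc (2 * Real.pi) 0 f with hF
  have h1 : ∫ z, F z ∂(volume : Measure (AddCircle (2 * Real.pi)))
      = (2 * Real.pi) • ∫ z, F z ∂(@AddCircle.haarAddCircle (2 * Real.pi) _) := by
    rw [AddCircle.volume_eq_smul_haarAddCircle, integral_smul_measure,
      ENNReal.toReal_ofReal (by positivity)]
  have h2 : ∫ x in (0:ℝ)..(0 + 2 * Real.pi), F ((x : AddCircle (2 * Real.pi)))
      = ∫ z, F z ∂(volume : Measure (AddCircle (2 * Real.pi))) :=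
    AddCircle.intervalIntegral_preimage (2 * Real.pi) 0 F
  have h3 : ∫ x in (0:ℝ)..(0 + 2 * Real.pi), F ((x : AddCircle (2 * Real.pi)))
      = ∫ x in (0:ℝ)..(2 * Real.pi), f x := by
    rw [zero_add, intervalIntegral.integral_of_le (by positivity),
      intervalIntegral.integral_of_le (by positivity)]
    refine setIntegral_congr_fun measurableSet_Ioc fun x hx => ?_
    exact AddCircle.liftIoc_coe_apply (by simpa using hx)
  rw [← h3, h2, h1, smul_smul]
  rw [one_div, inv_mul_cancel₀ (by positivity), one_smul]

lemma hm_coeff_congr {f h : AddCircle (2 * Real.pi) → ℂ}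
    (hfh : f =ᵐ[@AddCircle.haarAddCircle (2 * Real.pi) _] h) (m : ℤ) :
    fourierCoeff f m = fourierCoeff h m := by
  refine integral_congr_ae ?_
  filter_upwards [hfh] with t ht
  rw [ht]

local notation "⟪" a ", " b "⟫" => @inner ℂ _ _ a b

theorem hilbert_matrix_identity
    (K : ℝ → ℂ)
    (hK : MeasureTheory.MemLp K 2 (MeasureTheory.volume.restrict (Set.Ioo 0 (2 * Real.pi))))
    (n : ℤ) (η : ℂ) (hη : ∀ m : ℤ, η ≠ (m : ℂ))
    (c : ℤ → ℂ)
    (hc : ∀ m : ℤ, c m = ∫ t in (0:ℝ)..(2 * Real.pi), Complex.exp (-(Complex.I * m * t)) * K t) :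
    Summable (fun m : ℤ => c m / ((n : ℂ) + m + η)) ∧
    (∫ t in (0:ℝ)..(2 * Real.pi), Complex.exp (Complex.I * ((n : ℂ) + η) * t) * K t)
      = ((Complex.exp (2 * Real.pi * Complex.I * η) - 1) / (2 * Real.pi * Complex.I)) *
          ∑' m : ℤ, c m / ((n : ℂ) + m + η) ∧
    ‖∫ t in (0:ℝ)..(2 * Real.pi), Complex.exp (Complex.I * ((n : ℂ) + η) * t) * K t‖
      = ‖1 - Complex.exp (2 * Real.pi * Complex.I * η)‖ * (2 * Real.pi)⁻¹ *
          ‖∑' m : ℤ, c m / ((n : ℂ) + m + η)‖ := by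
  have hπ : (0:ℝ) < 2 * Real.pi := by positivity
  have hπc : ((2 * Real.pi : ℝ) : ℂ) ≠ 0 := by
    simpa using Real.pi_ne_zero
  have hden : ∀ m : ℤ, ((n : ℂ) + m + η) ≠ 0 := by
    intro m h
    apply hη (-(n + m))
    push_cast
    linear_combination h
  have hsmul : ∀ z : ℂ, (1 / (2 * Real.pi) : ℝ) • z = ((2 * Real.pi : ℝ) : ℂ)⁻¹ * z := by
    intro z
    rw [Complex.real_smul, one_div]
    push_cast
    ring
  set g : ℝ → ℂ := fun t => Complex.exp (Complex.I * ((n:ℂ) + η) * t) with hgdef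
  set gc : ℝ → ℂ := fun t => (starRingEnd ℂ) (g t) with hgcdef
  have hgcont : Continuous g := by
    apply Complex.continuous_exp.comp
    fun_prop
  have hgccont : Continuous gc := continuous_star.comp hgcont
  set K₁ : ℝ → ℂ := hK.1.mk K with hK1def
  have hK1sm : StronglyMeasurable K₁ := hK.1.stronglyMeasurable_mk
  have hres : volume.restrict (Set.Ioo (0:ℝ) (2 * Real.pi))
      = volume.restrict (Set.Ioc (0:ℝ) (2 * Real.pi)) :=
    Measure.restrict_congr_set Ioo_ae_eq_Ioc
  have hKae : K =ᵐ[volume.restrict (Set.Ioc (0:ℝ) (2 * Real.pi))] K₁ := by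
    rw [← hres]; exact hK.1.ae_eq_mk
  have hK1 : MemLp K₁ 2 (volume.restrict (Set.Ioc (0:ℝ) (2 * Real.pi))) :=
    (hres ▸ hK).ae_eq hKae
  -- the two L² elements
  have memK := hm_memLp_lift hK1sm hK1
  have memg : MemLp (AddCircle.liftIoc (2 * Real.pi) 0 gc) 2
      (@AddCircle.haarAddCircle (2 * Real.pi) _) := by
    obtain ⟨C, hC⟩ := (isCompact_Icc (a := (0:ℝ)) (b := 0 + 2 * Real.pi)
      ).exists_bound_of_continuousOn hgccont.continuousOn
    refine MemLp.of_bound (hm_lift_sm hgccont.stronglyMeasurable).aestronglyMeasurable C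
      (ae_of_all _ fun z => ?_)
    have hz := (AddCircle.equivIoc (2 * Real.pi) 0 z).2
    have he : AddCircle.liftIoc (2 * Real.pi) 0 gc z
        = gc ((AddCircle.equivIoc (2 * Real.pi) 0 z : ℝ)) := rfl
    rw [he]
    exact hC _ (Set.Ioc_subset_Icc_self hz)
  set x := memg.toLp _ with hxdef
  set y := memK.toLp _ with hydef
  have HS := (@fourierBasis (2 * Real.pi) _).hasSum_inner_mul_inner x y
  -- value of the interval integral of exp(i m t) * g t
  have hg_int : ∀ m : ℤ, (∫ t in (0:ℝ)..(2 * Real.pi), Complex.exp (Complex.I * m * t) * g t)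
      = (Complex.exp (2 * Real.pi * Complex.I * η) - 1) / (Complex.I * ((n:ℂ) + m + η)) := by
    intro m
    have h1 : ∀ t : ℝ, Complex.exp (Complex.I * m * t) * g t
        = Complex.exp ((Complex.I * ((n:ℂ) + m + η)) * t) := by
      intro t
      rw [hgdef, ← Complex.exp_add]
      ring_nf
    simp_rw [h1]
    rw [integral_exp_mul_complex (by simp [Complex.I_ne_zero, hden m])]
    congr 1
    have h2 : Complex.I * ((n:ℂ) + m + η) * ((2 * Real.pi : ℝ) : ℂ)
        = ((n + m : ℤ) : ℂ) * (2 * Real.pi * Complex.I) + 2 * Real.pi * Complex.I * η := by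
      push_cast; ring
    rw [h2, Complex.exp_add, Complex.exp_int_mul_two_pi_mul_I, one_mul]
    norm_num
  -- inner products against basis vectors
  have hxb : ∀ m : ℤ, ⟪x, (@fourierBasis (2 * Real.pi) _) m⟫
      = ((2 * Real.pi : ℝ) : ℂ)⁻¹ *
        ((Complex.exp (2 * Real.pi * Complex.I * η) - 1) / (Complex.I * ((n:ℂ) + m + η))) := by
    intro m
    have h1 : ⟪(@fourierBasis (2 * Real.pi) _) m, x⟫
        = fourierCoeff (AddCircle.liftIoc (2 * Real.pi) 0 gc) m := by
      rw [← HilbertBasis.repr_apply_apply, fourierBasis_repr]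
      exact hm_coeff_congr (MemLp.coeFn_toLp memg) m
    rw [← inner_conj_symm, h1, hm_coeff_lift, hsmul, map_mul, map_inv₀, Complex.conj_ofReal]
    congr 1
    rw [← hg_int m, intervalIntegral.integral_of_le hπ.le, ← integral_conj,
      intervalIntegral.integral_of_le hπ.le]
    refine setIntegral_congr_fun measurableSet_Ioc fun t ht => ?_
    simp only [hgcdef, map_mul, Complex.conj_conj, ← Complex.exp_conj, map_neg,
      Complex.conj_I, Complex.conj_ofReal, map_intCast]
    ring_nf
  have hby : ∀ m : ℤ, ⟪(@fourierBasis (2 * Real.pi) _) m, y⟫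
      = ((2 * Real.pi : ℝ) : ℂ)⁻¹ * c m := by
    intro m
    rw [← HilbertBasis.repr_apply_apply, fourierBasis_repr,
      hm_coeff_congr (MemLp.coeFn_toLp memK) m, hm_coeff_lift, hsmul]
    congr 1
    rw [hc m, intervalIntegral.integral_of_le hπ.le, intervalIntegral.integral_of_le hπ.le]
    refine integral_congr_ae ?_
    filter_upwards [hKae] with t ht
    rw [ht]
  have hxy : ⟪x, y⟫ = ((2 * Real.pi : ℝ) : ℂ)⁻¹ *
      ∫ t in (0:ℝ)..(2 * Real.pi), g t * K t := by
    rw [MeasureTheory.L2.inner_def]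
    simp_rw [RCLike.inner_apply]
    have hae : (fun z => y z * (starRingEnd ℂ) (x z))
        =ᵐ[@AddCircle.haarAddCircle (2 * Real.pi) _]
          AddCircle.liftIoc (2 * Real.pi) 0 (fun t => g t * K₁ t) := by
      filter_upwards [MemLp.coeFn_toLp memg, MemLp.coeFn_toLp memK] with z h1 h2
      rw [h1, h2]
      simp [AddCircle.liftIoc, hgcdef, mul_comm]
    rw [integral_congr_ae hae, hm_integral_lift, hsmul]
    congr 1
    rw [intervalIntegral.integral_of_le hπ.le, intervalIntegral.integral_of_le hπ.le]
    refine integral_congr_ae ?_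
    filter_upwards [hKae] with t ht
    rw [ht]
  -- nonvanishing of the constant
  have h2piI : (2 * (Real.pi:ℂ) * Complex.I) ≠ 0 := by
    simp [Complex.I_ne_zero, Real.pi_ne_zero]
  have hA0 : Complex.exp (2 * Real.pi * Complex.I * η) - 1 ≠ 0 := by
    rw [sub_ne_zero]
    intro h
    obtain ⟨k, hk⟩ := Complex.exp_eq_one_iff.mp h
    refine hη k ?_
    have hk' : η * (2 * (Real.pi:ℂ) * Complex.I) = (k:ℂ) * (2 * (Real.pi:ℂ) * Complex.I) := by
      rw [← hk]; ring
    exact mul_right_cancel₀ h2piI hk'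
  have hB0 : (Complex.exp (2 * Real.pi * Complex.I * η) - 1) / (2 * Real.pi * Complex.I) ≠ 0 :=
    div_ne_zero hA0 h2piI
  -- assemble
  have hterm : ∀ m : ℤ, ⟪x, (@fourierBasis (2 * Real.pi) _) m⟫ *
      ⟪(@fourierBasis (2 * Real.pi) _) m, y⟫
      = ((2 * Real.pi : ℝ) : ℂ)⁻¹ *
        (((Complex.exp (2 * Real.pi * Complex.I * η) - 1) / (2 * Real.pi * Complex.I)) *
          (c m / ((n:ℂ) + m + η))) := by
    intro m
    rw [hxb m, hby m]
    have hd := hden m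
    push_cast
    field_simp
  rw [hxy] at HS
  simp only [hterm] at HS
  have HS3 : HasSum (fun m : ℤ =>
      ((Complex.exp (2 * Real.pi * Complex.I * η) - 1) / (2 * Real.pi * Complex.I)) *
        (c m / ((n:ℂ) + m + η)))
      (∫ t in (0:ℝ)..(2 * Real.pi), g t * K t) := by
    have h := HS.mul_left ((2 * Real.pi : ℝ) : ℂ)
    simp only [← mul_assoc, mul_inv_cancel₀ hπc, one_mul] at h
    exact h
  have HS4 : HasSum (fun m : ℤ => c m / ((n:ℂ) + m + η))
      (((Complex.exp (2 * Real.pi * Complex.I * η) - 1) / (2 * Real.pi * Complex.I))⁻¹ *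
        ∫ t in (0:ℝ)..(2 * Real.pi), g t * K t) := by
    have h := HS3.mul_left
      (((Complex.exp (2 * Real.pi * Complex.I * η) - 1) / (2 * Real.pi * Complex.I)))⁻¹
    simp only [← mul_assoc, inv_mul_cancel₀ hB0, one_mul] at h
    exact h
  have htsum : (∫ t in (0:ℝ)..(2 * Real.pi), g t * K t)
      = ((Complex.exp (2 * Real.pi * Complex.I * η) - 1) / (2 * Real.pi * Complex.I)) *
        ∑' m : ℤ, c m / ((n:ℂ) + m + η) := by
    rw [HS4.tsum_eq, ← mul_assoc, mul_inv_cancel₀ hB0, one_mul]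
  refine ⟨HS4.summable, htsum, ?_⟩
  rw [htsum, norm_mul, norm_div]
  have habs1 : ‖Complex.exp (2 * Real.pi * Complex.I * η) - 1‖
      = ‖1 - Complex.exp (2 * Real.pi * Complex.I * η)‖ :=
    norm_sub_rev _ _
  have habs2 : ‖(2 * Real.pi * Complex.I : ℂ)‖ = 2 * Real.pi := by
    simp [abs_of_pos Real.pi_pos]
  rw [habs1, habs2, div_eq_mul_inv]
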